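/- Let A be symmetric positive definite with eigenvalues λ₁,…,λ_n, diagonal entries L_i = A_{ii}, and lower triangular part Γ. Then ‖Γ‖² ≤ ‖Γ‖_F² = (1/2)(‖A‖_F² + Σ_i A_{ii}²) ≤ λ_max(A)·Σ_i L_i, and consequently ‖ΓᵀA^{-1}Γ‖ ≤ κ(A)·Σ_i L_i where κ(A) = λ_max(A)/λ_min(A). -/

import Mathlib

open Matrix Polynomial Real

noncomputable def lowerTri {n : ℕ} (Q : Matrix (Fin n) (Fin n) ℝ) : Matrix (Fin n) (Fin n) ℝ :=
  fun i j => if j ≤ i then Q i j else 0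

noncomputable def l2norm {n : ℕ} (M : Matrix (Fin n) (Fin n) ℝ) : ℝ :=
  ‖(Matrix.toEuclideanCLM (𝕜 := ℝ) M : EuclideanSpace ℝ (Fin n) →L[ℝ] EuclideanSpace ℝ (Fin n))‖

noncomputable def specRad {n : ℕ} (M : Matrix (Fin n) (Fin n) ℝ) : ℝ :=
  sSup (Set.image (fun z : ℂ => ‖z‖) (spectrum ℂ (M.map (algebraMap ℝ ℂ))))

noncomputable def frob {n : ℕ} (M : Matrix (Fin n) (Fin n) ℝ) : ℝ :=
  Real.sqrt (∑ i, ∑ j, (M i j) ^ 2)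

section helpers
open scoped Matrix.Norms.L2Operator
variable {n : ℕ}

lemma l2norm_eq_norm (M : Matrix (Fin n) (Fin n) ℝ) : l2norm M = ‖M‖ := rfl

lemma frob_sq (M : Matrix (Fin n) (Fin n) ℝ) : frob M ^ 2 = ∑ i, ∑ j, (M i j)^2 :=
  Real.sq_sqrt (by positivity)

lemma l2norm_le_of_bound (M : Matrix (Fin n) (Fin n) ℝ) (c : ℝ) (hc : 0 ≤ c)
    (h : ∀ x : Fin n → ℝ, ∑ i, (M *ᵥ x) i ^ 2 ≤ c ^ 2 * ∑ i, x i ^ 2) :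
    l2norm M ≤ c := by
  rw [l2norm]
  apply ContinuousLinearMap.opNorm_le_bound _ hc
  intro x
  have h1 : ∀ i, (toEuclideanCLM (𝕜 := ℝ) M x) i = (M *ᵥ (fun j => x j)) i := by
    intro i
    have := congrFun (Matrix.ofLp_toEuclideanCLM (𝕜 := ℝ) M x) i
    simpa using this
  rw [EuclideanSpace.norm_eq, EuclideanSpace.norm_eq]
  simp only [h1, Real.norm_eq_abs, sq_abs]
  rw [show c * Real.sqrt (∑ i, x i ^ 2) = Real.sqrt (c ^ 2 * ∑ i, x i ^ 2) by
    rw [Real.sqrt_mul (sq_nonneg c), Real.sqrt_sq hc]]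
  exact Real.sqrt_le_sqrt (h fun j => x j)

lemma l2norm_le_frob (M : Matrix (Fin n) (Fin n) ℝ) : l2norm M ≤ frob M := by
  apply l2norm_le_of_bound M (frob M) (Real.sqrt_nonneg _)
  intro x
  rw [frob_sq, Finset.sum_mul]
  apply Finset.sum_le_sum
  intro i _
  calc (M *ᵥ x) i ^ 2 = (∑ j, M i j * x j) ^ 2 := by rfl
    _ ≤ (∑ j, (M i j) ^ 2) * ∑ j, x j ^ 2 :=
        Finset.sum_mul_sq_le_sq_mul_sq _ _ _

lemma l2norm_inv_le {A : Matrix (Fin n) (Fin n) ℝ} (hA : A.PosDef) {m : ℝ} (hm : 0 < m)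
    (h : ∀ x : Fin n → ℝ, m * ∑ i, x i ^ 2 ≤ x ⬝ᵥ (A *ᵥ x)) :
    l2norm A⁻¹ ≤ 1 / m := by
  apply l2norm_le_of_bound _ _ (by positivity)
  intro x
  set y := A⁻¹ *ᵥ x with hy
  have hAy : A *ᵥ y = x := by
    rw [hy, Matrix.mulVec_mulVec, Matrix.mul_nonsing_inv A (isUnit_iff_ne_zero.2 hA.det_pos.ne'),
      Matrix.one_mulVec]
  have h1 : m * ∑ i, y i ^ 2 ≤ y ⬝ᵥ x := by rw [← hAy]; exact h y
  have h2 : (y ⬝ᵥ x) ^ 2 ≤ (∑ i, y i ^ 2) * ∑ i, x i ^ 2 :=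
    Finset.sum_mul_sq_le_sq_mul_sq _ _ _
  have hyn : (0:ℝ) ≤ ∑ i, y i ^ 2 := by positivity
  have hxn : (0:ℝ) ≤ ∑ i, x i ^ 2 := by positivity
  rcases eq_or_lt_of_le hyn with h0 | h0
  · rw [← h0]; positivity
  · have : m ^ 2 * (∑ i, y i ^ 2) ≤ ∑ i, x i ^ 2 := by
      have := (pow_le_pow_left₀ (by positivity) h1 2).trans h2
      rw [mul_pow] at this
      calc m ^ 2 * (∑ i, y i ^ 2) = m ^ 2 * (∑ i, y i ^ 2)^2 / (∑ i, y i ^ 2) := by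
            field_simp
        _ ≤ (∑ i, y i ^ 2) * (∑ i, x i ^ 2) / (∑ i, y i ^ 2) := by
            gcongr
        _ = ∑ i, x i ^ 2 := by field_simp
    calc ∑ i, y i ^ 2 = (m^2 * ∑ i, y i ^ 2) / m^2 := by field_simp
      _ ≤ (∑ i, x i ^ 2) / m^2 := by gcongr
      _ = (1/m)^2 * ∑ i, x i ^2 := by field_simp

lemma exists_coords {A : Matrix (Fin n) (Fin n) ℝ} (hA : A.IsHermitian) (x : Fin n → ℝ) :
    ∃ c : Fin n → ℝ, x ⬝ᵥ (A *ᵥ x) = ∑ i, hA.eigenvalues i * c i ^ 2 ∧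
      x ⬝ᵥ x = ∑ i, c i ^ 2 := by
  set U : Matrix (Fin n) (Fin n) ℝ := (hA.eigenvectorUnitary : Matrix (Fin n) (Fin n) ℝ) with hU
  have hUs : U * star U = 1 := (Matrix.mem_unitaryGroup_iff).mp (hA.eigenvectorUnitary).2
  have hcm : ∀ v : Fin n → ℝ, x ⬝ᵥ (U *ᵥ v) = (star U *ᵥ x) ⬝ᵥ v := by
    intro v
    rw [Matrix.dotProduct_mulVec, ← Matrix.mulVec_transpose, Matrix.star_eq_conjTranspose,
      Matrix.conjTranspose_eq_transpose_of_trivial]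
  refine ⟨star U *ᵥ x, ?_, ?_⟩
  · conv_lhs => rw [hA.spectral_theorem, Unitary.conjStarAlgAut_apply]
    rw [← Matrix.mulVec_mulVec, ← Matrix.mulVec_mulVec, hcm]
    simp only [dotProduct, Matrix.mulVec_diagonal, Function.comp_apply]
    exact Finset.sum_congr rfl fun i _ => by simp [RCLike.ofReal_real_eq_id]; ring
  · have : (star U *ᵥ x) ⬝ᵥ (star U *ᵥ x) = x ⬝ᵥ ((U * star U) *ᵥ x) := by
      rw [← Matrix.mulVec_mulVec, hcm]
    rw [hUs, Matrix.one_mulVec] at this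
    rw [← this]
    simp [dotProduct, sq]

lemma trace_conj_eq (U X : Matrix (Fin n) (Fin n) ℝ) (h : star U * U = 1) :
    (U * X * star U).trace = X.trace := by
  rw [Matrix.trace_mul_comm, ← Matrix.mul_assoc, h, Matrix.one_mul]

lemma sum_diag_eq {A : Matrix (Fin n) (Fin n) ℝ} (hA : A.IsHermitian) :
    ∑ i, A i i = ∑ i, hA.eigenvalues i := by
  have h1 : A.trace = ∑ i, hA.eigenvalues i := by
    conv_lhs => rw [hA.spectral_theorem, Unitary.conjStarAlgAut_apply]
    rw [trace_conj_eq _ _ ((Matrix.mem_unitaryGroup_iff').mp (hA.eigenvectorUnitary).2),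
      Matrix.trace_diagonal]
    simp [RCLike.ofReal_real_eq_id]
  simpa [Matrix.trace] using h1

lemma sum_sq_eq {A : Matrix (Fin n) (Fin n) ℝ} (hA : A.IsHermitian) :
    ∑ i, ∑ j, A i j ^ 2 = ∑ i, hA.eigenvalues i ^ 2 := by
  set U : Matrix (Fin n) (Fin n) ℝ := (hA.eigenvectorUnitary : Matrix (Fin n) (Fin n) ℝ)
  set D : Matrix (Fin n) (Fin n) ℝ := Matrix.diagonal (RCLike.ofReal ∘ hA.eigenvalues)
  have hsU' : star U * U = 1 := (Matrix.mem_unitaryGroup_iff').mp (hA.eigenvectorUnitary).2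
  have key : A * A = U * (D * D) * star U := by
    calc A * A = (U*D*star U)*(U*D*star U) := by rw [hA.spectral_theorem, Unitary.conjStarAlgAut_apply]
      _ = U*D*((star U*U)*(D*star U)) := by noncomm_ring
      _ = U*(D*D)*star U := by rw [hsU', Matrix.one_mul]; noncomm_ring
  have h1 : (A * A).trace = ∑ i, hA.eigenvalues i ^ 2 := by
    rw [key, trace_conj_eq _ _ hsU', Matrix.diagonal_mul_diagonal, Matrix.trace_diagonal]
    simp [RCLike.ofReal_real_eq_id, sq]
  rw [← h1, Matrix.trace]
  apply Finset.sum_congr rfl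
  intro i _
  rw [Matrix.diag_apply, Matrix.mul_apply]
  apply Finset.sum_congr rfl
  intro j _
  rw [show A j i = A i j from by simpa using (Matrix.IsHermitian.apply hA i j), sq]

lemma eig_le_sSup {A : Matrix (Fin n) (Fin n) ℝ} (hA : A.IsHermitian) (i : Fin n) :
    hA.eigenvalues i ≤ sSup (spectrum ℝ A) :=
  le_csSup (Set.Finite.bddAbove A.finite_real_spectrum) (hA.eigenvalues_mem_spectrum_real i)

lemma sInf_le_eig {A : Matrix (Fin n) (Fin n) ℝ} (hA : A.IsHermitian) (i : Fin n) :
    sInf (spectrum ℝ A) ≤ hA.eigenvalues i :=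
  csInf_le (Set.Finite.bddBelow A.finite_real_spectrum) (hA.eigenvalues_mem_spectrum_real i)

lemma sInf_spectrum_pos {A : Matrix (Fin n) (Fin n) ℝ} (hA : A.PosDef) (hn : 0 < n) :
    0 < sInf (spectrum ℝ A) := by
  have hne : (spectrum ℝ A).Nonempty := by
    rw [hA.1.spectrum_real_eq_range_eigenvalues]
    exact ⟨_, ⟨⟨0, hn⟩, rfl⟩⟩
  rw [hA.1.spectrum_real_eq_range_eigenvalues] at hne ⊢
  obtain ⟨j, hj⟩ := Set.Nonempty.csInf_mem hne (Set.finite_range _)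
  rw [← hj]
  exact hA.eigenvalues_pos j

lemma quad_le_sSup {A : Matrix (Fin n) (Fin n) ℝ} (hA : A.IsHermitian) (x : Fin n → ℝ) :
    x ⬝ᵥ (A *ᵥ x) ≤ sSup (spectrum ℝ A) * ∑ i, x i ^ 2 := by
  obtain ⟨c, h1, h2⟩ := exists_coords hA x
  have h3 : x ⬝ᵥ x = ∑ i, x i ^ 2 := by simp [dotProduct, sq]
  rw [h1, ← h3, h2, Finset.mul_sum]
  exact Finset.sum_le_sum fun i _ =>
    mul_le_mul_of_nonneg_right (eig_le_sSup hA i) (sq_nonneg _)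

lemma sInf_le_quad {A : Matrix (Fin n) (Fin n) ℝ} (hA : A.IsHermitian) (x : Fin n → ℝ) :
    sInf (spectrum ℝ A) * ∑ i, x i ^ 2 ≤ x ⬝ᵥ (A *ᵥ x) := by
  obtain ⟨c, h1, h2⟩ := exists_coords hA x
  have h3 : x ⬝ᵥ x = ∑ i, x i ^ 2 := by simp [dotProduct, sq]
  rw [h1, ← h3, h2, Finset.mul_sum]
  exact Finset.sum_le_sum fun i _ =>
    mul_le_mul_of_nonneg_right (sInf_le_eig hA i) (sq_nonneg _)

lemma diag_pos {A : Matrix (Fin n) (Fin n) ℝ} (hA : A.PosDef) (i : Fin n) : 0 < A i i := by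
  have := hA.re_dotProduct_pos (x := Pi.single i 1) (by
    intro h
    have := congrFun h i
    simp at this)
  simpa [dotProduct, Pi.single_apply] using this

lemma diag_le_sSup {A : Matrix (Fin n) (Fin n) ℝ} (hA : A.IsHermitian) (i : Fin n) :
    A i i ≤ sSup (spectrum ℝ A) := by
  have := quad_le_sSup hA (Pi.single i 1)
  simpa [dotProduct, Pi.single_apply] using this

lemma l2norm_nonneg (M : Matrix (Fin n) (Fin n) ℝ) : 0 ≤ l2norm M := norm_nonneg _

lemma frob_lower_sq {A : Matrix (Fin n) (Fin n) ℝ} (hA : A.IsHermitian) :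
    frob (lowerTri A) ^ 2 + frob (lowerTri A) ^ 2 = frob A ^ 2 + ∑ i, A i i ^ 2 := by
  have hsymm : ∀ i j, A j i = A i j := fun i j => by
    simpa using (Matrix.IsHermitian.apply hA i j)
  rw [frob_sq, frob_sq]
  have swap : ∑ i, ∑ j, (lowerTri A i j)^2 = ∑ i, ∑ j, (if i ≤ j then A i j else 0)^2 := by
    rw [Finset.sum_comm]
    exact Finset.sum_congr rfl fun j _ => Finset.sum_congr rfl fun i _ => by
      simp only [lowerTri]
      rcases le_or_gt i j with h | h
      · simp [h, hsymm]
      · simp [h.not_ge, hsymm]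
  nth_rewrite 2 [swap]
  rw [← Finset.sum_add_distrib]
  have key : ∀ i j : Fin n, (lowerTri A i j)^2 + (if i ≤ j then A i j else 0)^2
      = A i j ^ 2 + (if j = i then A i j ^ 2 else 0) := by
    intro i j
    simp only [lowerTri]
    rcases lt_trichotomy i j with h | h | h
    · simp [h.le, h.not_ge, h.ne']
    · subst h; simp
    · simp [h.le, h.not_ge, h.ne]
  have this1 : ∀ i : Fin n, (∑ j, (lowerTri A i j)^2) + (∑ j, (if i ≤ j then A i j else 0)^2)
      = (∑ j, A i j ^ 2) + A i i ^ 2 := by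
    intro i
    rw [← Finset.sum_add_distrib, Finset.sum_congr rfl fun j _ => key i j,
      Finset.sum_add_distrib]
    simp
  rw [Finset.sum_congr rfl fun i _ => this1 i, Finset.sum_add_distrib]


/-- Bounds on ‖Γ‖² via the Frobenius norm, and the resulting bound
‖ΓᵀA⁻¹Γ‖ ≤ κ(A)·Σᵢ Lᵢ. -/
theorem stmt12 {n : ℕ} (A Γ : Matrix (Fin n) (Fin n) ℝ) (hA : A.PosDef)
    (hΓ : Γ = lowerTri A) :
    l2norm Γ ^ 2 ≤ frob Γ ^ 2 ∧
    frob Γ ^ 2 = (1 / 2) * (frob A ^ 2 + ∑ i, (A i i) ^ 2) ∧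
    (1 / 2) * (frob A ^ 2 + ∑ i, (A i i) ^ 2) ≤ sSup (spectrum ℝ A) * ∑ i, A i i ∧
    l2norm (Γᵀ * A⁻¹ * Γ)
      ≤ (sSup (spectrum ℝ A) / sInf (spectrum ℝ A)) * ∑ i, A i i := by
  have hfl := frob_lower_sq hA.1
  rw [← hΓ] at hfl
  have part1 : l2norm Γ ^ 2 ≤ frob Γ ^ 2 :=
    pow_le_pow_left₀ (l2norm_nonneg Γ) (l2norm_le_frob Γ) 2
  have part2 : frob Γ ^ 2 = (1 / 2) * (frob A ^ 2 + ∑ i, (A i i) ^ 2) := by linarith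
  set lM := sSup (spectrum ℝ A) with hlM
  set lm := sInf (spectrum ℝ A) with hlm
  have hdiag : ∑ i, A i i = ∑ i, hA.1.eigenvalues i := sum_diag_eq hA.1
  have hfrA : frob A ^ 2 = ∑ i, hA.1.eigenvalues i ^ 2 := by rw [frob_sq]; exact sum_sq_eq hA.1
  have hsum1 : ∑ i, hA.1.eigenvalues i ^ 2 ≤ lM * ∑ i, hA.1.eigenvalues i := by
    rw [Finset.mul_sum]
    exact Finset.sum_le_sum fun i _ => by
      rw [sq]
      exact mul_le_mul_of_nonneg_right (eig_le_sSup hA.1 i) (hA.eigenvalues_pos i).le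
  have hsum2 : ∑ i, A i i ^ 2 ≤ lM * ∑ i, A i i := by
    rw [Finset.mul_sum]
    exact Finset.sum_le_sum fun i _ => by
      rw [sq]
      exact mul_le_mul_of_nonneg_right (diag_le_sSup hA.1 i) (diag_pos hA i).le
  have part3 : (1 / 2) * (frob A ^ 2 + ∑ i, (A i i) ^ 2) ≤ lM * ∑ i, A i i := by
    rw [hfrA]
    rw [hdiag] at hsum2 ⊢
    linarith
  refine ⟨part1, part2, part3, ?_⟩
  rcases Nat.eq_zero_or_pos n with hn | hn
  · subst hn
    have h0 : (Γᵀ * A⁻¹ * Γ) = 0 := Subsingleton.elim _ _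
    have : l2norm (Γᵀ * A⁻¹ * Γ) = 0 := by
      rw [h0, l2norm, map_zero, norm_zero]
    rw [this]
    simp
  · have hm : 0 < lm := sInf_spectrum_pos hA hn
    have hinv : l2norm A⁻¹ ≤ 1 / lm :=
      l2norm_inv_le hA hm fun x => sInf_le_quad hA.1 x
    have hT : l2norm Γᵀ = l2norm Γ := by
      rw [l2norm_eq_norm, l2norm_eq_norm, ← Matrix.conjTranspose_eq_transpose_of_trivial Γ,
        Matrix.l2_opNorm_conjTranspose]
    have hmul : l2norm (Γᵀ * A⁻¹ * Γ) ≤ l2norm Γᵀ * l2norm A⁻¹ * l2norm Γ := by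
      simp only [l2norm_eq_norm]
      calc ‖Γᵀ * A⁻¹ * Γ‖ ≤ ‖Γᵀ * A⁻¹‖ * ‖Γ‖ := Matrix.l2_opNorm_mul _ _
        _ ≤ ‖Γᵀ‖ * ‖A⁻¹‖ * ‖Γ‖ :=
            mul_le_mul_of_nonneg_right (Matrix.l2_opNorm_mul _ _) (norm_nonneg _)
    have hfg : frob Γ ^ 2 ≤ lM * ∑ i, A i i := part2 ▸ part3
    have hchain : l2norm Γᵀ * l2norm A⁻¹ * l2norm Γ ≤ frob Γ * (1/lm) * frob Γ := by
      rw [hT]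
      have h1 := l2norm_le_frob Γ
      have h2 := l2norm_nonneg Γ
      have h3 := l2norm_nonneg (A⁻¹ : Matrix (Fin n) (Fin n) ℝ)
      have h4 : (0:ℝ) ≤ 1/lm := by positivity
      have h5 : 0 ≤ frob Γ := Real.sqrt_nonneg _
      gcongr
    have hfin : frob Γ * (1/lm) * frob Γ ≤ (lM / lm) * ∑ i, A i i := by
      have : frob Γ * (1/lm) * frob Γ = (frob Γ ^ 2) * (1/lm) := by ring
      rw [this]
      calc (frob Γ ^ 2) * (1/lm) ≤ (lM * ∑ i, A i i) * (1/lm) := by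
            apply mul_le_mul_of_nonneg_right hfg (by positivity)
        _ = (lM / lm) * ∑ i, A i i := by ring
    linarith
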